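/- Let Ω be a finite set, q a probability vector on Ω with q(ω) > 0 for all ω, γ ∈ (0,1), and h : Ω → ℝ. Then sup_{p ∈ P(γ)} ∑_ω p(ω) h(ω) = γ · max_{ω ∈ Ω} h(ω) + (1−γ) · CVaR_γ(h; q), where CVaR_γ(h; q) = inf_{u ∈ ℝ} { u + (1/(1−γ)) ∑_ω q(ω) max(h(ω) − u, 0) } and P(γ) is the total-variation ambiguity set of radius γ around q. -/

import Mathlib

open Finset

def IsProbVec {Ω : Type*} [Fintype Ω] (p : Ω → ℝ) : Prop :=
  (∀ ω, 0 ≤ p ω) ∧ ∑ ω, p ω = 1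

noncomputable def tv {Ω : Type*} [Fintype Ω] (p q : Ω → ℝ) : ℝ :=
  (1 / 2) * ∑ ω, |p ω - q ω|

def Amb {Ω : Type*} [Fintype Ω] (q : Ω → ℝ) (γ : ℝ) : Set (Ω → ℝ) :=
  {p | IsProbVec p ∧ tv p q ≤ γ}

theorem worstcase_eq_sup_cvar {Ω : Type*} [Fintype Ω] [Nonempty Ω]
    (q : Ω → ℝ) (hq : IsProbVec q) (hqpos : ∀ ω, 0 < q ω)
    (γ : ℝ) (hγ0 : 0 < γ) (hγ1 : γ < 1) (h : Ω → ℝ) :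
    sSup ((fun p => ∑ ω, p ω * h ω) '' Amb q γ) =
      γ * (⨆ ω : Ω, h ω) +
        (1 - γ) * sInf (Set.range fun u : ℝ =>
          u + (1 - γ)⁻¹ * ∑ ω, q ω * max (h ω - u) 0) := by
  classical
  obtain ⟨hq0, hq1⟩ := hq
  obtain ⟨ωs, hωs⟩ : ∃ ω0 : Ω, ∀ ω, h ω ≤ h ω0 := Finite.exists_max h
  set M : ℝ := ⨆ ω : Ω, h ω with hMdef
  have hMeq : M = h ωs :=
    le_antisymm (ciSup_le hωs) (le_ciSup (Set.Finite.bddAbove (Set.finite_range h)) ωs)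
  have hhM : ∀ ω, h ω ≤ M := fun ω => hMeq ▸ hωs ω
  have h1γ : (0:ℝ) < 1 - γ := by linarith
  set g : ℝ → ℝ := fun u : ℝ => u + (1 - γ)⁻¹ * ∑ ω, q ω * max (h ω - u) 0 with hg
  have hgval : ∀ u : ℝ, (1 - γ) * g u = (1 - γ) * u + ∑ ω, q ω * max (h ω - u) 0 := by
    intro u
    rw [hg]
    field_simp
  -- key upper bound
  have key : ∀ p : Ω → ℝ, IsProbVec p → tv p q ≤ γ → ∀ u : ℝ,
      ∑ ω, p ω * h ω ≤ γ * M + ((1 - γ) * u + ∑ ω, q ω * max (h ω - u) 0) := by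
    intro p hp htvp u
    obtain ⟨hp0, hp1⟩ := hp
    have hqmax0 : (0:ℝ) ≤ ∑ ω, q ω * max (h ω - u) 0 := by
      apply Finset.sum_nonneg
      intro ω _
      exact mul_nonneg (hq0 ω) (le_max_right _ _)
    by_cases hu : u ≤ M
    · have e1 : ∑ ω, p ω * (h ω - u) = (∑ ω, p ω * h ω) - u := by
        have : ∑ ω, p ω * (h ω - u) = ∑ ω, p ω * h ω - ∑ ω, p ω * u := by
          rw [← Finset.sum_sub_distrib]
          exact Finset.sum_congr rfl fun ω _ => by ring
        rw [this, ← Finset.sum_mul, hp1, one_mul]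
      have e2 : ∑ ω, p ω * (h ω - u) ≤ ∑ ω, p ω * max (h ω - u) 0 :=
        Finset.sum_le_sum fun ω _ => mul_le_mul_of_nonneg_left (le_max_left _ _) (hp0 ω)
      have e3 : ∑ ω, p ω * max (h ω - u) 0 - ∑ ω, q ω * max (h ω - u) 0
          ≤ γ * (M - u) := by
        have step1 : ∑ ω, p ω * max (h ω - u) 0 - ∑ ω, q ω * max (h ω - u) 0
            = ∑ ω, (p ω - q ω) * max (h ω - u) 0 := by
          rw [← Finset.sum_sub_distrib]
          exact Finset.sum_congr rfl fun ω _ => by ring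
        have step2 : ∀ ω, (p ω - q ω) * max (h ω - u) 0 ≤ max (p ω - q ω) 0 * (M - u) := by
          intro ω
          rcases le_or_gt (q ω) (p ω) with hpq | hpq
          · rw [max_eq_left (sub_nonneg.2 hpq)]
            apply mul_le_mul_of_nonneg_left _ (sub_nonneg.2 hpq)
            exact max_le (by linarith [hhM ω]) (by linarith)
          · rw [max_eq_right (by linarith : p ω - q ω ≤ 0)]
            rw [zero_mul]
            exact mul_nonpos_of_nonpos_of_nonneg (by linarith) (le_max_right _ _)
        have step3 : ∑ ω, max (p ω - q ω) 0 ≤ γ := by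
          have e : ∀ ω, max (p ω - q ω) 0 = ((p ω - q ω) + |p ω - q ω|) / 2 := by
            intro ω; rcases le_or_gt 0 (p ω - q ω) with hc | hc
            · rw [max_eq_left hc, abs_of_nonneg hc]; ring
            · rw [max_eq_right hc.le, abs_of_neg hc]; ring
          rw [Finset.sum_congr rfl fun ω _ => e ω]
          have : ∑ ω, ((p ω - q ω) + |p ω - q ω|) / 2
              = ((∑ ω, (p ω - q ω)) + ∑ ω, |p ω - q ω|) / 2 := by
            rw [← Finset.sum_add_distrib, Finset.sum_div]
          rw [this, Finset.sum_sub_distrib, hp1, hq1]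
          have htv2 : ∑ ω, |p ω - q ω| ≤ 2 * γ := by
            unfold tv at htvp; linarith
          linarith
        calc ∑ ω, p ω * max (h ω - u) 0 - ∑ ω, q ω * max (h ω - u) 0
            = ∑ ω, (p ω - q ω) * max (h ω - u) 0 := step1
          _ ≤ ∑ ω, max (p ω - q ω) 0 * (M - u) :=
              Finset.sum_le_sum fun ω _ => step2 ω
          _ = (∑ ω, max (p ω - q ω) 0) * (M - u) := by rw [Finset.sum_mul]
          _ ≤ γ * (M - u) :=
              mul_le_mul_of_nonneg_right step3 (by linarith)
      linarith
    · push_neg at hu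
      have hpM : ∑ ω, p ω * h ω ≤ M := by
        calc ∑ ω, p ω * h ω ≤ ∑ ω, p ω * M :=
              Finset.sum_le_sum fun ω _ => mul_le_mul_of_nonneg_left (hhM ω) (hp0 ω)
          _ = M := by rw [← Finset.sum_mul, hp1, one_mul]
      nlinarith
  -- q is in the ambiguity set
  have hqmem : q ∈ Amb q γ := by
    refine ⟨⟨hq0, hq1⟩, ?_⟩
    unfold tv
    simp only [sub_self, abs_zero, Finset.sum_const_zero, mul_zero]
    linarith
  -- quantile construction
  set F : ℝ → ℝ := fun t => ∑ ω, if h ω ≤ t then q ω else 0 with hF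
  set T : Finset ℝ := (Finset.univ.image h).filter (fun t => γ ≤ F t) with hT
  have hMT : h ωs ∈ T := by
    refine Finset.mem_filter.2 ⟨Finset.mem_image_of_mem h (Finset.mem_univ ωs), ?_⟩
    have : F (h ωs) = 1 := by
      rw [hF, ← hq1]
      exact Finset.sum_congr rfl fun ω _ => if_pos (hωs ω)
    rw [this]; linarith
  have hTne : T.Nonempty := ⟨_, hMT⟩
  set u : ℝ := T.min' hTne with hudef
  have huT : u ∈ T := T.min'_mem hTne
  have hFu : γ ≤ F u := (Finset.mem_filter.1 huT).2
  obtain ⟨ω₀, -, hω₀⟩ := Finset.mem_image.1 (Finset.mem_filter.1 huT).1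
  set m₁ : ℝ := ∑ ω, if h ω < u then q ω else 0 with hm₁def
  set m₂ : ℝ := ∑ ω, if h ω = u then q ω else 0 with hm₂def
  have hFsplit : F u = m₁ + m₂ := by
    rw [hF, hm₁def, hm₂def, ← Finset.sum_add_distrib]
    refine Finset.sum_congr rfl fun ω _ => ?_
    rcases lt_trichotomy (h ω) u with h1 | h1 | h1
    · rw [if_pos h1.le, if_pos h1, if_neg h1.ne, add_zero]
    · rw [if_pos h1.le, if_neg (by rw [h1]; exact lt_irrefl u), if_pos h1, zero_add]
    · rw [if_neg (not_le.2 h1), if_neg (not_lt.2 h1.le), if_neg (ne_of_gt h1), add_zero]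
  have hm₂pos : 0 < m₂ := by
    have h1 : (if h ω₀ = u then q ω₀ else 0) ≤ m₂ := by
      refine Finset.single_le_sum (f := fun ω => if h ω = u then q ω else 0)
        (fun ω _ => ?_) (Finset.mem_univ ω₀)
      split_ifs
      · exact hq0 ω
      · exact le_refl 0
    rw [if_pos hω₀] at h1
    exact lt_of_lt_of_le (hqpos ω₀) h1
  have hm₁γ : m₁ ≤ γ := by
    by_contra hcon
    push_neg at hcon
    have hAne : (Finset.univ.filter (fun ω => h ω < u)).Nonempty := by
      by_contra hA
      rw [Finset.not_nonempty_iff_eq_empty] at hA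
      have : m₁ = 0 := by
        rw [hm₁def]
        refine Finset.sum_eq_zero fun ω _ => if_neg ?_
        intro hlt
        have : ω ∈ Finset.univ.filter (fun ω => h ω < u) :=
          Finset.mem_filter.2 ⟨Finset.mem_univ ω, hlt⟩
        rw [hA] at this
        exact absurd this (Finset.notMem_empty ω)
      linarith
    obtain ⟨ω₁, hω₁A, hmax1⟩ := Finset.exists_max_image _ h hAne
    have hω₁u : h ω₁ < u := (Finset.mem_filter.1 hω₁A).2
    have hFt : m₁ ≤ F (h ω₁) := by
      rw [hF, hm₁def]
      refine Finset.sum_le_sum fun ω _ => ?_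
      by_cases hc : h ω < u
      · rw [if_pos hc, if_pos (hmax1 ω (Finset.mem_filter.2 ⟨Finset.mem_univ ω, hc⟩))]
      · rw [if_neg hc]
        split_ifs
        · exact hq0 ω
        · exact le_refl 0
    have ht'T : h ω₁ ∈ T :=
      Finset.mem_filter.2 ⟨Finset.mem_image_of_mem h (Finset.mem_univ ω₁), by linarith⟩
    have := T.min'_le _ ht'T
    rw [← hudef] at this
    linarith
  have hγm : γ ≤ m₁ + m₂ := by rw [← hFsplit]; exact hFu
  set c : ℝ := 1 - (γ - m₁) / m₂ with hcdef
  have hcm : (1 - c) * m₂ = γ - m₁ := by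
    rw [hcdef]
    field_simp
    ring
  have hc0 : 0 ≤ c := by
    rw [hcdef, sub_nonneg, div_le_one hm₂pos]
    linarith
  have hc1 : c ≤ 1 := by
    rw [hcdef]
    have : 0 ≤ (γ - m₁) / m₂ := div_nonneg (by linarith) hm₂pos.le
    linarith
  set p : Ω → ℝ := fun ω =>
    (if h ω < u then 0 else if h ω = u then c * q ω else q ω)
      + (if ω = ωs then γ else 0) with hpdef
  have hbase_eq : ∀ ω, (if h ω < u then 0 else if h ω = u then c * q ω else q ω)
      = q ω - (if h ω < u then q ω else 0) - (if h ω = u then (1 - c) * q ω else 0) := by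
    intro ω
    rcases lt_trichotomy (h ω) u with h1 | h1 | h1
    · rw [if_pos h1, if_pos h1, if_neg h1.ne]; ring
    · rw [if_neg (by rw [h1]; exact lt_irrefl u), if_pos h1,
        if_neg (by rw [h1]; exact lt_irrefl u), if_pos h1]; ring
    · rw [if_neg (not_lt.2 h1.le), if_neg (ne_of_gt h1), if_neg (not_lt.2 h1.le),
        if_neg (ne_of_gt h1)]; ring
  have hsum_ite2 : ∑ ω, (if h ω = u then (1 - c) * q ω else 0) = γ - m₁ := by
    rw [← hcm, hm₂def, Finset.mul_sum]
    refine Finset.sum_congr rfl fun ω _ => ?_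
    split_ifs
    · rfl
    · rw [mul_zero]
  have hp0 : ∀ ω, 0 ≤ p ω := by
    intro ω
    rw [hpdef]
    have h1 : (0:ℝ) ≤ (if h ω < u then 0 else if h ω = u then c * q ω else q ω) := by
      split_ifs
      · exact le_refl 0
      · exact mul_nonneg hc0 (hq0 ω)
      · exact hq0 ω
    have h2 : (0:ℝ) ≤ (if ω = ωs then γ else 0) := by
      split_ifs
      · exact hγ0.le
      · exact le_refl 0
    exact add_nonneg h1 h2
  have hsum_ind : ∑ ω, (if ω = ωs then γ else 0) = γ := by
    rw [Finset.sum_ite_eq' Finset.univ ωs (fun _ => γ), if_pos (Finset.mem_univ ωs)]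
  have hp1 : ∑ ω, p ω = 1 := by
    have : ∑ ω, p ω = ∑ ω, (if h ω < u then 0 else if h ω = u then c * q ω else q ω)
        + ∑ ω, (if ω = ωs then γ else 0) := by
      rw [← Finset.sum_add_distrib]
    rw [this, hsum_ind]
    have e : ∑ ω, (if h ω < u then 0 else if h ω = u then c * q ω else q ω)
        = ∑ ω, q ω - m₁ - (γ - m₁) := by
      rw [Finset.sum_congr rfl fun ω _ => hbase_eq ω, ← hsum_ite2, hm₁def]
      rw [Finset.sum_sub_distrib, Finset.sum_sub_distrib]
    rw [e, hq1]
    ring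
  have htvp : tv p q ≤ γ := by
    have habs : ∀ ω, |p ω - q ω| ≤ (if h ω < u then q ω else 0)
        + (if h ω = u then (1 - c) * q ω else 0) + (if ω = ωs then γ else 0) := by
      intro ω
      have hpe : p ω - q ω = - (if h ω < u then q ω else 0)
          - (if h ω = u then (1 - c) * q ω else 0) + (if ω = ωs then γ else 0) := by
        rw [hpdef]
        simp only []
        rw [hbase_eq ω]
        ring
      rw [hpe]
      have hqω := hq0 ω
      have hcq : 0 ≤ (1 - c) * q ω := mul_nonneg (by linarith) hqω
      split_ifs <;> (rw [abs_le]; constructor <;> linarith)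
    unfold tv
    have hsum := Finset.sum_le_sum (fun ω (_ : ω ∈ Finset.univ) => habs ω)
    have e : ∑ ω, ((if h ω < u then q ω else 0)
        + (if h ω = u then (1 - c) * q ω else 0) + (if ω = ωs then γ else 0))
        = m₁ + (γ - m₁) + γ := by
      rw [Finset.sum_add_distrib, Finset.sum_add_distrib, hsum_ite2, hsum_ind, hm₁def]
    rw [e] at hsum
    linarith
  -- value of the construction
  have hval : ∑ ω, p ω * h ω = γ * M + (1 - γ) * g u := by
    have e0 : ∑ ω, p ω * h ω
        = ∑ ω, (q ω * h ω - (if h ω < u then q ω * h ω else 0)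
            - (if h ω = u then (1 - c) * q ω * u else 0))
          + ∑ ω, (if ω = ωs then γ * h ω else 0) := by
      rw [← Finset.sum_add_distrib]
      refine Finset.sum_congr rfl fun ω _ => ?_
      rw [hpdef]
      simp only []
      rw [hbase_eq ω, add_mul]
      congr 1
      · rcases lt_trichotomy (h ω) u with h1 | h1 | h1
        · rw [if_pos h1, if_pos h1, if_neg h1.ne, if_neg h1.ne]; ring
        · have hnl : ¬ h ω < u := by rw [h1]; exact lt_irrefl u
          rw [if_neg hnl, if_neg hnl, if_pos h1, if_pos h1, h1]; ring
        · rw [if_neg (not_lt.2 h1.le), if_neg (not_lt.2 h1.le), if_neg (ne_of_gt h1),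
            if_neg (ne_of_gt h1)]; ring
      · split_ifs
        · ring
        · ring
    have e1 : ∑ ω, (if ω = ωs then γ * h ω else 0) = γ * M := by
      rw [Finset.sum_ite_eq' Finset.univ ωs (fun ω => γ * h ω), if_pos (Finset.mem_univ ωs),
        hMeq]
    set s₁ : ℝ := ∑ ω, if h ω < u then q ω * h ω else 0 with hs₁def
    have e2 : ∑ ω, (if h ω = u then (1 - c) * q ω * u else 0) = (γ - m₁) * u := by
      have e2' : ∑ ω, (if h ω = u then (1 - c) * q ω * u else 0)
          = (∑ ω, (if h ω = u then (1 - c) * q ω else 0)) * u := by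
        rw [Finset.sum_mul]
        refine Finset.sum_congr rfl fun ω _ => ?_
        split_ifs
        · rfl
        · rw [zero_mul]
      rw [e2', hsum_ite2]
    have e3 : ∑ ω, (q ω * h ω - (if h ω < u then q ω * h ω else 0)
        - (if h ω = u then (1 - c) * q ω * u else 0))
        = ∑ ω, q ω * h ω - s₁ - (γ - m₁) * u := by
      rw [Finset.sum_sub_distrib, Finset.sum_sub_distrib, e2, hs₁def]
    -- the CVaR side
    have e4 : ∑ ω, q ω * max (h ω - u) 0
        = ∑ ω, q ω * h ω - u - (s₁ - u * m₁) := by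
      have e5 : ∑ ω, q ω * max (h ω - u) 0
          = ∑ ω, (q ω * h ω - u * q ω - (if h ω < u then q ω * h ω - u * q ω else 0)) := by
        refine Finset.sum_congr rfl fun ω _ => ?_
        rcases lt_or_ge (h ω) u with h1 | h1
        · rw [if_pos h1, max_eq_right (by linarith)]; ring
        · rw [if_neg (not_lt.2 h1), max_eq_left (by linarith)]; ring
      have e6 : ∑ ω, (if h ω < u then q ω * h ω - u * q ω else 0)
          = s₁ - u * m₁ := by
        rw [hs₁def, hm₁def, Finset.mul_sum, ← Finset.sum_sub_distrib]
        refine Finset.sum_congr rfl fun ω _ => ?_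
        split_ifs
        · rfl
        · rw [mul_zero, sub_zero]
      rw [e5, Finset.sum_sub_distrib, Finset.sum_sub_distrib, e6, ← Finset.mul_sum, hq1]
      ring
    rw [e0, e1, e3, hgval u, e4]
    ring
  -- assembly
  have hpmem : p ∈ Amb q γ := ⟨⟨hp0, hp1⟩, htvp⟩
  have hrange_ne : (Set.range g).Nonempty := ⟨g 0, Set.mem_range_self 0⟩
  have hbdd_below : BddBelow (Set.range g) := by
    refine ⟨((∑ ω, q ω * h ω) - γ * M) / (1 - γ), ?_⟩
    rintro x ⟨v, rfl⟩
    rw [div_le_iff₀ h1γ]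
    have h1 := key q ⟨hq0, hq1⟩ hqmem.2 v
    have h2 := hgval v
    have h3 := mul_comm (g v) (1 - γ)
    linarith
  have hub : ∀ x ∈ (fun p => ∑ ω, p ω * h ω) '' Amb q γ,
      x ≤ γ * M + (1 - γ) * sInf (Set.range g) := by
    rintro x ⟨p', hp', rfl⟩
    have hle : ((∑ ω, p' ω * h ω) - γ * M) / (1 - γ) ≤ sInf (Set.range g) := by
      refine le_csInf hrange_ne ?_
      rintro b ⟨v, rfl⟩
      rw [div_le_iff₀ h1γ]
      have h1 := key p' hp'.1 hp'.2 v
      have h2 := hgval v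
      have h3 := mul_comm (g v) (1 - γ)
      linarith
    rw [div_le_iff₀ h1γ] at hle
    have h3 := mul_comm (sInf (Set.range g)) (1 - γ)
    linarith
  have hne : ((fun p => ∑ ω, p ω * h ω) '' Amb q γ).Nonempty :=
    ⟨_, Set.mem_image_of_mem _ hqmem⟩
  have hbddA : BddAbove ((fun p => ∑ ω, p ω * h ω) '' Amb q γ) :=
    ⟨γ * M + (1 - γ) * sInf (Set.range g), fun x hx => hub x hx⟩
  refine le_antisymm (csSup_le hne hub) ?_
  have h1 : sInf (Set.range g) ≤ g u := csInf_le hbdd_below (Set.mem_range_self u)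
  have h3 : γ * M + (1 - γ) * g u ≤ sSup ((fun p => ∑ ω, p ω * h ω) '' Amb q γ) := by
    rw [← hval]
    exact le_csSup hbddA ⟨p, hpmem, rfl⟩
  have h2 : (1 - γ) * sInf (Set.range g) ≤ (1 - γ) * g u :=
    mul_le_mul_of_nonneg_left h1 h1γ.le
  linarith
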